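/- Let Γ be a simple graph on a vertex type V, let u, v be adjacent vertices such that the edge {u, v} is a bridge of Γ. Then for every vertex x and every closed walk p from x to x in Γ, the number of darts of p going from u to v equals the number of darts of p going from v to u. -/

import Mathlib

open Classical in
private lemma crossing_count {V : Type*} (Γ : SimpleGraph V) (g : V → Bool) :
    ∀ {a b : V} (p : Γ.Walk a b),
      ((p.darts.filter (fun d => g d.toProd.1 && !g d.toProd.2)).length : ℤ)
        - (p.darts.filter (fun d => !g d.toProd.1 && g d.toProd.2)).length
      = (if g a then 1 else 0) - (if g b then 1 else 0) := by
  intro a b p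
  induction p with
  | nil => simp
  | @cons w w' w'' hadj q ih =>
    simp only [SimpleGraph.Walk.darts_cons, List.filter_cons]
    by_cases h1 : g w <;> by_cases h2 : g w' <;> by_cases h3 : g w'' <;>
      simp only [h1, h2, h3, Bool.not_true, Bool.not_false,
        Bool.true_and, Bool.false_and, Bool.and_true, Bool.and_false,
        List.length_cons, if_true, if_false, reduceIte] at ih ⊢ <;>
      push_cast at ih ⊢ <;> omega

/-- If `{u, v}` is a bridge of a simple graph `Γ`, then every closed walk in `Γ` crosses
the bridge the same number of times in each direction: the number of darts of the walk
going from `u` to `v` equals the number of darts going from `v` to `u`. -/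
theorem closed_walk_crosses_bridge_evenly {V : Type*} [DecidableEq V] (Γ : SimpleGraph V)
    (u v : V) (huv : Γ.Adj u v) (hb : Γ.IsBridge s(u, v)) (x : V) (p : Γ.Walk x x) :
    (p.darts.filter (fun d => d.toProd = (u, v))).length =
      (p.darts.filter (fun d => d.toProd = (v, u))).length := by
  classical
  set Γ' := Γ \ SimpleGraph.fromEdgeSet {s(u, v)} with hΓ'
  set g : V → Bool := fun w => decide (Γ'.Reachable u w) with hg
  have hgu : g u = true := by
    simp only [hg, decide_eq_true_eq]
    exact SimpleGraph.Reachable.refl u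
  have hgv : g v = false := by
    simp only [hg, decide_eq_false_iff_not]
    exact SimpleGraph.isBridge_iff.mp hb
  have hsame : ∀ d : Γ.Dart, d.edge ≠ s(u, v) → g d.toProd.1 = g d.toProd.2 := by
    intro d hd
    have hadj : Γ'.Adj d.toProd.1 d.toProd.2 := by
      refine ⟨d.adj, ?_⟩
      simp only [SimpleGraph.fromEdgeSet_adj, Set.mem_singleton_iff]
      rintro ⟨he, -⟩
      exact hd he
    simp only [hg, decide_eq_decide]
    exact ⟨fun h => h.trans hadj.reachable, fun h => h.trans hadj.symm.reachable⟩
  have hup : ∀ d : Γ.Dart, (g d.toProd.1 && !g d.toProd.2) = decide (d.toProd = (u, v)) := by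
    intro d
    by_cases hd : d.edge = s(u, v)
    · rcases (Sym2.eq_iff.mp hd) with ⟨h1, h2⟩ | ⟨h1, h2⟩
      · have : d.toProd = (u, v) := Prod.ext h1 h2
        simp [this, hgu, hgv]
      · have hne : u ≠ v := huv.ne
        have : d.toProd = (v, u) := Prod.ext h1 h2
        simp [this, hgu, hgv, Prod.ext_iff, hne.symm]
    · have := hsame d hd
      have hne : d.toProd ≠ (u, v) := by
        rintro h
        exact hd (by simp [SimpleGraph.Dart.edge, h])
      simp [this, hne]
  have hdown : ∀ d : Γ.Dart, (!g d.toProd.1 && g d.toProd.2) = decide (d.toProd = (v, u)) := by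
    intro d
    by_cases hd : d.edge = s(u, v)
    · rcases (Sym2.eq_iff.mp hd) with ⟨h1, h2⟩ | ⟨h1, h2⟩
      · have hne : u ≠ v := huv.ne
        have : d.toProd = (u, v) := Prod.ext h1 h2
        simp [this, hgu, hgv, Prod.ext_iff, hne]
      · have : d.toProd = (v, u) := Prod.ext h1 h2
        simp [this, hgu, hgv]
    · have := hsame d hd
      have hne : d.toProd ≠ (v, u) := by
        rintro h
        exact hd (by simp [SimpleGraph.Dart.edge, h, Sym2.eq_swap])
      simp [this, hne]
  have key := crossing_count Γ g p
  have e1 : p.darts.filter (fun d => g d.toProd.1 && !g d.toProd.2)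
      = p.darts.filter (fun d => d.toProd = (u, v)) := by
    apply List.filter_congr
    intro d _
    exact (hup d)
  have e2 : p.darts.filter (fun d => !g d.toProd.1 && g d.toProd.2)
      = p.darts.filter (fun d => d.toProd = (v, u)) := by
    apply List.filter_congr
    intro d _
    exact (hdown d)
  rw [e1, e2] at key
  simp at key
  omega
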